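/- The single-variable integral for I_xx evaluates as ∫_{−2π/3}^{2π/3} −cos²t·(−2510 cos t + 547 cos 2t + 1129 cos 3t + 648 cos 4t + 181 cos 5t + 21 cos 6t − 1744) / (15360 cos⁸(t/2)·√(2 cos t + 1)) dt = (32/45)·E(3/4) − (2/45)·K(3/4), where K(m) = ∫₀^{π/2} 1/√(1 − m sin²θ) dθ and E(m) = ∫₀^{π/2} √(1 − m sin²θ) dθ. -/

import Mathlib

open Real
set_option maxHeartbeats 2000000

/-- Complete elliptic integral of the first kind. -/
noncomputable def ellipticK (m : ℝ) : ℝ :=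
  ∫ θ in (0:ℝ)..(π/2), 1 / Real.sqrt (1 - m * Real.sin θ ^ 2)

/-- Complete elliptic integral of the second kind. -/
noncomputable def ellipticE (m : ℝ) : ℝ :=
  ∫ θ in (0:ℝ)..(π/2), Real.sqrt (1 - m * Real.sin θ ^ 2)

noncomputable def hEl (θ : ℝ) : ℝ :=
  32/45 * Real.sqrt (1 - 3/4 * Real.sin θ ^ 2) - 2/45 * (1 / Real.sqrt (1 - 3/4 * Real.sin θ ^ 2))

lemma hDen_pos (θ : ℝ) : (0:ℝ) < 1 - 3/4 * Real.sin θ ^ 2 := by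
  nlinarith [Real.sin_sq_le_one θ]

lemma hEl_cont : Continuous hEl := by
  have h : ∀ θ : ℝ, Real.sqrt (1 - 3/4 * Real.sin θ ^ 2) ≠ 0 := fun θ =>
    (Real.sqrt_pos.2 (hDen_pos θ)).ne'
  apply Continuous.sub
  · exact continuous_const.mul ((Real.continuous_sqrt).comp (by continuity))
  · exact continuous_const.mul (Continuous.div continuous_const
      ((Real.continuous_sqrt).comp (by continuity)) h)

noncomputable def Aint (u : ℝ) : ℝ := ∫ θ in (0:ℝ)..u, hEl θ

noncomputable def psiF (t : ℝ) : ℝ := Real.arcsin (2 / Real.sqrt 3 * Real.sin (t/2))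

noncomputable def Gfun (t : ℝ) : ℝ :=
  Real.sin (t/2) * Real.sqrt (2 * Real.cos t + 1) *
    (9 - 39 * Real.cos (t/2)^2 + 20 * Real.cos (t/2)^4 - 64 * Real.cos (t/2)^6
      - 80 * Real.cos (t/2)^8 + 624 * Real.cos (t/2)^10 - 576 * Real.cos (t/2)^12)
    / (720 * Real.cos (t/2)^7)

noncomputable def PhiF (t : ℝ) : ℝ := Gfun t + Aint (psiF t) / 2

lemma Aint_hasDerivAt (u : ℝ) : HasDerivAt Aint (hEl u) u :=
  intervalIntegral.integral_hasDerivAt_right (hEl_cont.intervalIntegrable _ _)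
    (hEl_cont.stronglyMeasurableAtFilter _ _) hEl_cont.continuousAt

lemma Aint_cont : Continuous Aint :=
  intervalIntegral.continuous_primitive (fun _ _ => hEl_cont.intervalIntegrable _ _) 0



lemma basic_facts {t : ℝ} (ht : t ∈ Set.Ioo (-(2*π/3)) (2*π/3)) :
    1/2 < Real.cos (t/2) ∧ Real.cos t = 2*Real.cos (t/2)^2 - 1 ∧
    Real.sin t = 2*Real.sin (t/2)*Real.cos (t/2) ∧ 0 < 2*Real.cos t + 1 := by
  obtain ⟨h1, h2⟩ := ht
  have hpi := Real.pi_pos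
  have habs : |t/2| < π/3 := by rw [abs_lt]; constructor <;> linarith
  have hcgt : 1/2 < Real.cos (t/2) := by
    have h3 : Real.cos (π/3) < Real.cos |t/2| :=
      Real.cos_lt_cos_of_nonneg_of_le_pi (abs_nonneg _) (by linarith) habs
    rwa [Real.cos_pi_div_three, Real.cos_abs] at h3
  have hc : Real.cos t = 2*Real.cos (t/2)^2 - 1 := by
    have h := Real.cos_two_mul (t/2); rwa [show 2*(t/2) = t by ring] at h
  have hs : Real.sin t = 2*Real.sin (t/2)*Real.cos (t/2) := by
    have h := Real.sin_two_mul (t/2); rw [show 2*(t/2) = t by ring] at h; linarith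
  exact ⟨hcgt, hc, hs, by nlinarith⟩

lemma psi_part_deriv {t : ℝ} (ht : t ∈ Set.Ioo (-(2*π/3)) (2*π/3)) :
    HasDerivAt (fun t => Aint (psiF t))
      ((14 + 16*Real.cos t)/(45*Real.sqrt (2*Real.cos t + 1))) t := by
  obtain ⟨hcgt, hc, hs, hXsq⟩ := basic_facts ht
  have hcpos : (0:ℝ) < Real.cos (t/2) := by linarith
  have hpyth : Real.sin (t/2)^2 + Real.cos (t/2)^2 = 1 := Real.sin_sq_add_cos_sq (t/2)
  have h3 : Real.sqrt 3 ^ 2 = 3 := Real.sq_sqrt (by norm_num)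
  have h3pos : 0 < Real.sqrt 3 := Real.sqrt_pos.2 (by norm_num)
  have hx2 : (2 / Real.sqrt 3 * Real.sin (t/2))^2 = 4/3 * Real.sin (t/2)^2 := by
    rw [mul_pow, div_pow, h3]; ring
  have hxlt : |2 / Real.sqrt 3 * Real.sin (t/2)| < 1 := by
    rw [← sq_lt_one_iff_abs_lt_one, hx2]; nlinarith
  rw [abs_lt] at hxlt
  have hne1 : 2 / Real.sqrt 3 * Real.sin (t/2) ≠ -1 := by linarith
  have hne2 : 2 / Real.sqrt 3 * Real.sin (t/2) ≠ 1 := by linarith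
  -- inner derivative
  have hinner : HasDerivAt (fun x : ℝ => 2 / Real.sqrt 3 * Real.sin (x/2))
      (2 / Real.sqrt 3 * (Real.cos (t/2) * (1/2))) t := by
    exact ((Real.hasDerivAt_sin (t/2)).comp t ((hasDerivAt_id t).div_const 2)).const_mul _
  have harc := (Real.hasDerivAt_arcsin hne1 hne2).comp t hinner
  have htot := (Aint_hasDerivAt (psiF t)).comp t harc
  have hXpos : 0 < Real.sqrt (2*Real.cos t + 1) := Real.sqrt_pos.2 hXsq
  have hX2 : Real.sqrt (2*Real.cos t + 1)^2 = 2*Real.cos t + 1 := Real.sq_sqrt hXsq.le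
  -- simplify value
  have hsinpsi : Real.sin (psiF t) = 2 / Real.sqrt 3 * Real.sin (t/2) :=
    Real.sin_arcsin (by linarith) (by linarith)
  have hsq1 : 1 - (2 / Real.sqrt 3 * Real.sin (t/2))^2 = (2*Real.cos t + 1)/3 := by
    rw [hx2]; rw [hc]; nlinarith
  have hsq2 : Real.sqrt (1 - (2 / Real.sqrt 3 * Real.sin (t/2))^2)
      = Real.sqrt (2*Real.cos t + 1) / Real.sqrt 3 := by
    rw [hsq1, Real.sqrt_div hXsq.le]
  -- now compute the value
  have hval : hEl (psiF t) * (1 / Real.sqrt (1 - (2 / Real.sqrt 3 * Real.sin (t/2))^2) *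
      (2 / Real.sqrt 3 * (Real.cos (t/2) * (1/2))))
      = (14 + 16*Real.cos t)/(45*Real.sqrt (2*Real.cos t + 1)) := by
    rw [hsq2]
    unfold hEl
    rw [hsinpsi, hx2]
    have hin : 1 - 3/4 * (4/3 * Real.sin (t/2)^2) = Real.cos (t/2)^2 := by nlinarith
    rw [hin, Real.sqrt_sq hcpos.le]
    set c := Real.cos (t/2) with hcdef
    set X := Real.sqrt (2*Real.cos t + 1) with hXdef
    set r := Real.sqrt 3 with hrdef
    rw [hc] at hX2 ⊢
    field_simp
    ring_nf
  rw [hval] at htot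
  exact htot




lemma Gfun_deriv {t : ℝ} (ht : t ∈ Set.Ioo (-(2*π/3)) (2*π/3)) :
    HasDerivAt Gfun
      (-(Real.cos t ^ 2 * (-2510 * Real.cos t + 547 * Real.cos (2*t) + 1129 * Real.cos (3*t) +
          648 * Real.cos (4*t) + 181 * Real.cos (5*t) + 21 * Real.cos (6*t) - 1744)) /
        (15360 * Real.cos (t/2) ^ 8 * Real.sqrt (2 * Real.cos t + 1))
        - (14 + 16*Real.cos t) / (45*Real.sqrt (2*Real.cos t + 1)) / 2) t := by
  obtain ⟨hcgt, hc, hs, hXsq⟩ := basic_facts ht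
  have hcpos : (0:ℝ) < Real.cos (t/2) := by linarith
  have hXpos := Real.sqrt_pos.2 hXsq
  have hXne : Real.sqrt (2*Real.cos t + 1) ≠ 0 := hXpos.ne'
  have hcne : Real.cos (t/2) ≠ 0 := hcpos.ne'
  have h_half : HasDerivAt (fun x : ℝ => x/2) (1/2) t := (hasDerivAt_id t).div_const 2
  have h_s : HasDerivAt (fun x : ℝ => Real.sin (x/2)) (Real.cos (t/2) * (1/2)) t :=
    by have h := (Real.hasDerivAt_sin (t/2)).comp t h_half; exact h
  have h_c : HasDerivAt (fun x : ℝ => Real.cos (x/2)) (-Real.sin (t/2) * (1/2)) t :=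
    by have h := (Real.hasDerivAt_cos (t/2)).comp t h_half; exact h
  have h_in : HasDerivAt (fun x : ℝ => 2*Real.cos x + 1) (2 * -Real.sin t) t :=
    ((Real.hasDerivAt_cos t).const_mul 2).add_const 1
  have h_sqrt : HasDerivAt (fun x : ℝ => Real.sqrt (2*Real.cos x + 1))
      (1/(2*Real.sqrt (2*Real.cos t + 1)) * (2 * -Real.sin t)) t :=
    (Real.hasDerivAt_sqrt hXsq.ne').comp t h_in
  have hpoly : HasDerivAt
      (fun y : ℝ => 9 - 39*y^2 + 20*y^4 - 64*y^6 - 80*y^8 + 624*y^10 - 576*y^12)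
      (-78*Real.cos (t/2) + 80*Real.cos (t/2)^3 - 384*Real.cos (t/2)^5 - 640*Real.cos (t/2)^7
        + 6240*Real.cos (t/2)^9 - 6912*Real.cos (t/2)^11) (Real.cos (t/2)) := by
    have h := (((((((hasDerivAt_pow 2 (Real.cos (t/2))).const_mul (39:ℝ)).const_sub 9).add
      ((hasDerivAt_pow 4 (Real.cos (t/2))).const_mul 20)).sub
      ((hasDerivAt_pow 6 (Real.cos (t/2))).const_mul 64)).sub
      ((hasDerivAt_pow 8 (Real.cos (t/2))).const_mul 80)).add
      ((hasDerivAt_pow 10 (Real.cos (t/2))).const_mul 624)).sub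
      ((hasDerivAt_pow 12 (Real.cos (t/2))).const_mul 576)
    refine h.congr_deriv ?_
    push_cast
    ring
  have hQ := hpoly.comp t h_c
  have hN := (h_s.mul h_sqrt).mul hQ
  have hD := (h_c.pow 7).const_mul (720:ℝ)
  have hDne : 720 * Real.cos (t/2)^7 ≠ 0 := by positivity
  have hG := hN.div hD hDne
  have h2t : Real.cos (2*t) = 2*Real.cos t^2 - 1 := Real.cos_two_mul t
  have h3t : Real.cos (3*t) = 4*Real.cos t^3 - 3*Real.cos t := Real.cos_three_mul t
  have h4t : Real.cos (4*t) = 8*Real.cos t^4 - 8*Real.cos t^2 + 1 := by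
    rw [show (4:ℝ)*t = 2*(2*t) by ring, Real.cos_two_mul, Real.cos_two_mul]; ring
  have h5t : Real.cos (5*t) = 16*Real.cos t^5 - 20*Real.cos t^3 + 5*Real.cos t := by
    rw [show (5:ℝ)*t = 2*t + 3*t by ring, Real.cos_add, Real.cos_two_mul, Real.cos_three_mul,
      Real.sin_two_mul, Real.sin_three_mul]
    linear_combination (8*Real.cos t*Real.sin t^2 + 2*Real.cos t - 8*Real.cos t^3) *
      Real.sin_sq_add_cos_sq t
  have h6t : Real.cos (6*t) = 32*Real.cos t^6 - 48*Real.cos t^4 + 18*Real.cos t^2 - 1 := by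
    rw [show (6:ℝ)*t = 2*(3*t) by ring, Real.cos_two_mul, Real.cos_three_mul]; ring
  unfold Gfun
  refine hG.congr_deriv (Eq.symm ?_)
  simp only [Pi.mul_apply, Pi.pow_apply, Function.comp_apply]
  rw [h2t, h3t, h4t, h5t, h6t]
  set c := Real.cos (t/2) with hcdef
  set s := Real.sin (t/2) with hsdef
  set X := Real.sqrt (2*Real.cos t + 1) with hXdef
  have hX2 : X^2 = 4*c^2 - 1 := by rw [hXdef, Real.sq_sqrt hXsq.le, hc]; ring
  have hpyth : s^2 + c^2 = 1 := Real.sin_sq_add_cos_sq (t/2)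
  rw [hc, hs]
  linear_combination (norm := (push_cast; field_simp; ring1))
    (-(-45360*c^8 + 295920*c^10 - 492480*c^12 + 161280*c^14 - 57600*c^16 + 1808640*c^18
      - 9262080*c^20 + 9953280*c^22)/(1036800*c^16*X)) * hpyth
    - ((6480*c^10 - 28080*c^12 + 14400*c^14 - 46080*c^16 - 57600*c^18 + 449280*c^20
      - 414720*c^22 + 45360*s^2*c^8 - 140400*s^2*c^10 + 43200*s^2*c^12 - 46080*s^2*c^14
      + 57600*s^2*c^16 - 1347840*s^2*c^18 + 2073600*s^2*c^20)/(1036800*c^16*X)) * hX2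


noncomputable def fInt (t : ℝ) : ℝ :=
  -(Real.cos t ^ 2 *
      (-2510 * Real.cos t + 547 * Real.cos (2*t) + 1129 * Real.cos (3*t) +
        648 * Real.cos (4*t) + 181 * Real.cos (5*t) + 21 * Real.cos (6*t) - 1744)) /
    (15360 * Real.cos (t/2) ^ 8 * Real.sqrt (2 * Real.cos t + 1))

lemma pisq : π ^ 2 ≤ 10 := by nlinarith [Real.pi_lt_d2, Real.pi_pos]

lemma low_bound {t : ℝ} (ht : t ∈ Set.Icc (-(2*π/3)) (2*π/3)) :
    (2*π/3 - t)*(2*π/3 + t)/5 ≤ 2*Real.cos t + 1 ∧ 1/2 ≤ Real.cos (t/2) := by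
  obtain ⟨h1, h2⟩ := ht
  have hpi := Real.pi_pos
  have hpi3 := Real.pi_gt_three
  have hcc := Real.cos_sub_cos (t/2) (π/3)
  rw [Real.cos_pi_div_three] at hcc
  have hw1 : (0:ℝ) ≤ (t/2 + π/3)/2 := by linarith
  have hw1' : (t/2 + π/3)/2 ≤ π/2 := by linarith
  have hw2 : (0:ℝ) ≤ -((t/2 - π/3)/2) := by linarith
  have hw2' : -((t/2 - π/3)/2) ≤ π/2 := by linarith
  have hs1 := Real.mul_le_sin hw1 hw1'
  have hs2 := Real.mul_le_sin hw2 hw2'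
  rw [Real.sin_neg] at hs2
  have hb1 : (0:ℝ) ≤ 2/π * ((t/2 + π/3)/2) := by positivity
  have hb2 : (0:ℝ) ≤ 2/π * (-((t/2 - π/3)/2)) := by positivity
  have hprod : (2/π * ((t/2 + π/3)/2)) * (2/π * (-((t/2 - π/3)/2))) ≤
      Real.sin ((t/2 + π/3)/2) * -Real.sin ((t/2 - π/3)/2) := by
    apply mul_le_mul hs1 hs2 hb2 (by linarith)
  have hchalf : Real.cos (t/2) - 1/2 = 2 * (Real.sin ((t/2 + π/3)/2) * -Real.sin ((t/2 - π/3)/2)) := by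
    rw [show (t/2 + π/3)/2 = (t/2 + π/3)/2 by rfl]; nlinarith [hcc]
  have hnn : (0:ℝ) ≤ (2*π/3 - t)*(2*π/3 + t) := mul_nonneg (by linarith) (by linarith)
  have h10 : (2/π * ((t/2 + π/3)/2)) * (2/π * (-((t/2 - π/3)/2)))
      = (2*π/3 - t)*(2*π/3 + t)/(4*π^2) := by field_simp; ring
  rw [h10] at hprod
  have hprod' : (2*π/3 - t)*(2*π/3 + t) ≤
      (Real.sin ((t/2 + π/3)/2) * -Real.sin ((t/2 - π/3)/2)) * (4*π^2) := by
    rw [← div_le_iff₀ (by positivity)]; exact hprod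
  have hkey' : (2*π/3 - t)*(2*π/3 + t) ≤ (Real.cos (t/2) - 1/2) * (2*π^2) := by
    rw [hchalf]; linarith
  have hcge : 1/2 ≤ Real.cos (t/2) := by
    nlinarith [hkey', hnn, Real.pi_pos]
  refine ⟨?_, hcge⟩
  have hc : Real.cos t = 2*Real.cos (t/2)^2 - 1 := by
    have h := Real.cos_two_mul (t/2); rwa [show 2*(t/2) = t by ring] at h
  rw [hc, div_le_iff₀ (by norm_num : (0:ℝ) < 5)]
  nlinarith [hkey', pisq, sq_nonneg (2*Real.cos (t/2) - 1),
    mul_nonneg (by linarith : (0:ℝ) ≤ Real.cos (t/2) - 1/2) (by linarith [pisq] : (0:ℝ) ≤ 10 - π^2)]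

lemma fInt_bound {t : ℝ} (ht : t ∈ Set.Ioc (-(2*π/3)) (2*π/3)) :
    ‖fInt t‖ ≤ 200*((2*π/3 - t) ^ (-(1/2):ℝ) + (2*π/3 + t) ^ (-(1/2):ℝ)) := by
  have hpi := Real.pi_pos
  have hpi3 := Real.pi_gt_three
  rcases eq_or_lt_of_le ht.2 with heq | hlt
  · -- t = 2π/3 : fInt t = 0
    have hcos : Real.cos (2*π/3) = -(1/2) := by
      have h := Real.cos_pi_sub (π/3)
      rw [Real.cos_pi_div_three] at h
      rwa [show π - π/3 = 2*π/3 by ring] at h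
    have h0 : fInt t = 0 := by
      rw [heq]
      unfold fInt
      rw [show 2*Real.cos (2*π/3) + 1 = 0 by rw [hcos]; ring, Real.sqrt_zero, mul_zero, div_zero]
    rw [h0, norm_zero]
    have h1 : (0:ℝ) ≤ (2*π/3 - t) ^ (-(1/2):ℝ) := Real.rpow_nonneg (by rw [heq]; linarith) _
    have h2 : (0:ℝ) ≤ (2*π/3 + t) ^ (-(1/2):ℝ) := Real.rpow_nonneg (by rw [heq]; linarith) _
    linarith
  · obtain ⟨hlb, hcge⟩ := low_bound ⟨ht.1.le, ht.2⟩
    have hapos : (0:ℝ) < 2*π/3 - t := by linarith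
    have hbpos : (0:ℝ) < 2*π/3 + t := by linarith [ht.1]
    have hXsq : (0:ℝ) < 2*Real.cos t + 1 := lt_of_lt_of_le (by positivity) hlb
    have hXpos : 0 < Real.sqrt (2*Real.cos t + 1) := Real.sqrt_pos.2 hXsq
    set X := Real.sqrt (2*Real.cos t + 1) with hXdef
    -- numerator bound
    set P := -2510 * Real.cos t + 547 * Real.cos (2*t) + 1129 * Real.cos (3*t) +
        648 * Real.cos (4*t) + 181 * Real.cos (5*t) + 21 * Real.cos (6*t) - 1744 with hP
    have hPb : |P| ≤ 6780 := by
      rw [abs_le]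
      constructor <;>
      · rw [hP]
        nlinarith [Real.neg_one_le_cos t, Real.cos_le_one t, Real.neg_one_le_cos (2*t),
          Real.cos_le_one (2*t), Real.neg_one_le_cos (3*t), Real.cos_le_one (3*t),
          Real.neg_one_le_cos (4*t), Real.cos_le_one (4*t), Real.neg_one_le_cos (5*t),
          Real.cos_le_one (5*t), Real.neg_one_le_cos (6*t), Real.cos_le_one (6*t)]
    have hnum : |(-(Real.cos t ^ 2 * P))| ≤ 6780 := by
      rw [abs_neg, abs_mul]
      have h1 : |Real.cos t ^ 2| ≤ 1 := by
        rw [abs_le]; constructor <;> nlinarith [Real.neg_one_le_cos t, Real.cos_le_one t]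
      nlinarith [abs_nonneg P, abs_nonneg (Real.cos t ^ 2)]
    have hden : (0:ℝ) < 15360 * Real.cos (t/2)^8 * X := by positivity
    have hdenge : 60 * X ≤ 15360 * Real.cos (t/2)^8 * X := by
      have h8 : (1/2:ℝ)^8 ≤ Real.cos (t/2)^8 := by
        apply pow_le_pow_left₀ (by norm_num) hcge
      nlinarith [hXpos]
    have hf113 : ‖fInt t‖ ≤ 113 / X := by
      unfold fInt
      rw [Real.norm_eq_abs, abs_div, abs_of_pos hden]
      calc |(-(Real.cos t ^ 2 * P))| / (15360 * Real.cos (t/2)^8 * X)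
          ≤ 6780 / (15360 * Real.cos (t/2)^8 * X) := by gcongr
        _ ≤ 6780 / (60 * X) := by
            rw [div_le_div_iff₀ hden (by positivity)]
            nlinarith [hdenge]
        _ = 113 / X := by
            rw [div_eq_div_iff (by positivity : (0:ℝ) < 60*X).ne' hXpos.ne']; ring
    -- now compare 113 / X with the rpow majorant
    have hXa : Real.sqrt ((2*π/3 - t)*((2*π/3 + t)/5)) ≤ X := by
      apply Real.sqrt_le_sqrt
      calc (2*π/3 - t)*((2*π/3 + t)/5) = (2*π/3 - t)*(2*π/3 + t)/5 := by ring
        _ ≤ 2*Real.cos t + 1 := hlb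
    rw [Real.sqrt_mul hapos.le] at hXa
    have hr1 : (2*π/3 - t) ^ (-(1/2):ℝ) = 1 / Real.sqrt (2*π/3 - t) := by
      rw [Real.rpow_neg hapos.le, ← Real.sqrt_eq_rpow, one_div]
    have hr2 : (2*π/3 + t) ^ (-(1/2):ℝ) = 1 / Real.sqrt (2*π/3 + t) := by
      rw [Real.rpow_neg hbpos.le, ← Real.sqrt_eq_rpow, one_div]
    rw [hr1, hr2]
    have hsA := Real.sqrt_pos.2 hapos
    have hsB := Real.sqrt_pos.2 hbpos
    refine le_trans hf113 ?_
    rcases le_or_gt 0 t with htp | htn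
    · -- t ≥ 0 : use the (2π/3 - t) term
      have hB2 : Real.sqrt (2/5) ≤ Real.sqrt ((2*π/3 + t)/5) :=
        Real.sqrt_le_sqrt (by linarith)
      have hqb : (113/200 : ℝ) ≤ Real.sqrt (2/5) := by
        nlinarith [Real.sq_sqrt (show (0:ℝ) ≤ 2/5 by norm_num), Real.sqrt_nonneg (2/5:ℝ)]
      have hkey : 113 / X ≤ 200 / Real.sqrt (2*π/3 - t) := by
        rw [div_le_div_iff₀ hXpos hsA]
        nlinarith [hXa, Real.sqrt_nonneg (2*π/3 - t), Real.sqrt_nonneg ((2*π/3 + t)/5),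
          Real.sqrt_nonneg (2/5), mul_le_mul_of_nonneg_left hB2 (Real.sqrt_nonneg (2*π/3 - t)),
          mul_le_mul_of_nonneg_left hqb (Real.sqrt_nonneg (2*π/3 - t))]
      have : (0:ℝ) ≤ 200 * (1/Real.sqrt (2*π/3 + t)) := by positivity
      calc 113 / X ≤ 200 / Real.sqrt (2*π/3 - t) := hkey
        _ ≤ 200*(1/Real.sqrt (2*π/3 - t) + 1/Real.sqrt (2*π/3 + t)) := by
            rw [div_eq_mul_one_div]; linarith
    · -- t < 0 : use the (2π/3 + t) term
      have hXa' : Real.sqrt ((2*π/3 + t)*((2*π/3 - t)/5)) ≤ X := by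
        apply Real.sqrt_le_sqrt
        calc (2*π/3 + t)*((2*π/3 - t)/5) = (2*π/3 - t)*(2*π/3 + t)/5 := by ring
          _ ≤ 2*Real.cos t + 1 := hlb
      rw [Real.sqrt_mul hbpos.le] at hXa'
      have hB2 : Real.sqrt (2/5) ≤ Real.sqrt ((2*π/3 - t)/5) :=
        Real.sqrt_le_sqrt (by linarith)
      have hqb : (113/200 : ℝ) ≤ Real.sqrt (2/5) := by
        nlinarith [Real.sq_sqrt (show (0:ℝ) ≤ 2/5 by norm_num), Real.sqrt_nonneg (2/5:ℝ)]
      have hkey : 113 / X ≤ 200 / Real.sqrt (2*π/3 + t) := by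
        rw [div_le_div_iff₀ hXpos hsB]
        nlinarith [hXa', Real.sqrt_nonneg (2*π/3 + t), Real.sqrt_nonneg ((2*π/3 - t)/5),
          Real.sqrt_nonneg (2/5), mul_le_mul_of_nonneg_left hB2 (Real.sqrt_nonneg (2*π/3 + t)),
          mul_le_mul_of_nonneg_left hqb (Real.sqrt_nonneg (2*π/3 + t))]
      have : (0:ℝ) ≤ 200 * (1/Real.sqrt (2*π/3 - t)) := by positivity
      calc 113 / X ≤ 200 / Real.sqrt (2*π/3 + t) := hkey
        _ ≤ 200*(1/Real.sqrt (2*π/3 - t) + 1/Real.sqrt (2*π/3 + t)) := by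
            rw [div_eq_mul_one_div]; linarith




lemma PhiF_deriv {t : ℝ} (ht : t ∈ Set.Ioo (-(2*π/3)) (2*π/3)) :
    HasDerivAt PhiF (fInt t) t := by
  have h := (Gfun_deriv ht).add ((psi_part_deriv ht).div_const 2)
  have heq : -(Real.cos t ^ 2 * (-2510 * Real.cos t + 547 * Real.cos (2*t) + 1129 * Real.cos (3*t) +
          648 * Real.cos (4*t) + 181 * Real.cos (5*t) + 21 * Real.cos (6*t) - 1744)) /
        (15360 * Real.cos (t/2) ^ 8 * Real.sqrt (2 * Real.cos t + 1))
        - (14 + 16*Real.cos t) / (45*Real.sqrt (2*Real.cos t + 1)) / 2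
        + (14 + 16*Real.cos t) / (45*Real.sqrt (2*Real.cos t + 1)) / 2 = fInt t := by
    unfold fInt; ring
  rw [heq] at h
  exact h

lemma fInt_integrable : IntervalIntegrable fInt MeasureTheory.volume (-(2*π/3)) (2*π/3) := by
  have hpi := Real.pi_pos
  have h1 : IntervalIntegrable (fun x : ℝ => (2*π/3 - x) ^ (-(1/2):ℝ)) MeasureTheory.volume
      (-(2*π/3)) (2*π/3) := by
    have h := (intervalIntegral.intervalIntegrable_rpow' (r := (-(1/2):ℝ)) (by norm_num)
      (a := 4*π/3) (b := 0)).comp_sub_left (2*π/3)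
    rwa [show 2*π/3 - 4*π/3 = -(2*π/3) by ring, show 2*π/3 - 0 = 2*π/3 by ring] at h
  have h2 : IntervalIntegrable (fun x : ℝ => (2*π/3 + x) ^ (-(1/2):ℝ)) MeasureTheory.volume
      (-(2*π/3)) (2*π/3) := by
    have h := (intervalIntegral.intervalIntegrable_rpow' (r := (-(1/2):ℝ)) (by norm_num)
      (a := 0) (b := 4*π/3)).comp_add_left (2*π/3)
    rwa [show 0 - 2*π/3 = -(2*π/3) by ring, show 4*π/3 - 2*π/3 = 2*π/3 by ring] at h
  have hmaj := (h1.add h2).const_mul (200:ℝ)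
  apply hmaj.mono_fun' ?_ ?_
  · apply Measurable.aestronglyMeasurable
    apply Measurable.div <;> fun_prop
  · rw [Filter.EventuallyLE, MeasureTheory.ae_restrict_iff' measurableSet_uIoc]
    refine Filter.Eventually.of_forall (fun t ht => ?_)
    have ht' : t ∈ Set.Ioc (-(2*π/3)) (2*π/3) := by
      rwa [Set.uIoc_of_le (by linarith)] at ht
    exact fInt_bound ht'

lemma PhiF_cont : ContinuousOn PhiF (Set.Icc (-(2*π/3)) (2*π/3)) := by
  have hpi := Real.pi_pos
  apply ContinuousOn.add
  · unfold Gfun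
    apply ContinuousOn.div
    · apply Continuous.continuousOn; fun_prop
    · apply Continuous.continuousOn; fun_prop
    · intro t ht
      have := (low_bound ht).2
      positivity
  · have hpsi : Continuous psiF := by
      unfold psiF
      exact Real.continuous_arcsin.comp (by fun_prop)
    exact ((Aint_cont.comp hpsi).div_const 2).continuousOn

lemma Gfun_right : Gfun (2*π/3) = 0 := by
  have hcos : Real.cos (2*π/3) = -(1/2) := by
    have h := Real.cos_pi_sub (π/3)
    rw [Real.cos_pi_div_three] at h
    rwa [show π - π/3 = 2*π/3 by ring] at h
  unfold Gfun
  rw [show 2*Real.cos (2*π/3) + 1 = 0 by rw [hcos]; ring, Real.sqrt_zero, mul_zero, zero_mul,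
    zero_div]

lemma Gfun_left : Gfun (-(2*π/3)) = 0 := by
  have hcos : Real.cos (2*π/3) = -(1/2) := by
    have h := Real.cos_pi_sub (π/3)
    rw [Real.cos_pi_div_three] at h
    rwa [show π - π/3 = 2*π/3 by ring] at h
  unfold Gfun
  rw [show 2*Real.cos (-(2*π/3)) + 1 = 0 by rw [Real.cos_neg, hcos]; ring, Real.sqrt_zero,
    mul_zero, zero_mul, zero_div]

lemma sqrt3_ne : Real.sqrt 3 ≠ 0 := by
  have : (0:ℝ) < Real.sqrt 3 := Real.sqrt_pos.2 (by norm_num)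
  exact this.ne'

lemma psiF_right : psiF (2*π/3) = π/2 := by
  unfold psiF
  rw [show (2*π/3)/2 = π/3 by ring, Real.sin_pi_div_three,
    show 2/Real.sqrt 3 * (Real.sqrt 3/2) = 1 by field_simp <;> ring]
  exact Real.arcsin_one

lemma psiF_left : psiF (-(2*π/3)) = -(π/2) := by
  unfold psiF
  rw [show (-(2*π/3))/2 = -(π/3) by ring, Real.sin_neg, Real.sin_pi_div_three,
    show 2/Real.sqrt 3 * -(Real.sqrt 3/2) = -1 by field_simp <;> ring]
  exact Real.arcsin_neg_one

lemma Aint_neg : Aint (-(π/2)) = - Aint (π/2) := by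
  have heven : ∀ x : ℝ, hEl (-x) = hEl x := by
    intro x; unfold hEl; rw [Real.sin_neg]; ring_nf
  unfold Aint
  rw [intervalIntegral.integral_symm]
  have h := intervalIntegral.integral_comp_neg (a := (0:ℝ)) (b := π/2) (f := hEl)
  simp only [heven] at h
  simp only [neg_zero] at h
  rw [← h]

lemma Aint_value : Aint (π/2) = 32/45 * ellipticE (3/4) - 2/45 * ellipticK (3/4) := by
  have hc1 : Continuous (fun θ : ℝ => Real.sqrt (1 - 3/4 * Real.sin θ ^ 2)) := by fun_prop
  have hne : ∀ θ : ℝ, Real.sqrt (1 - 3/4 * Real.sin θ ^ 2) ≠ 0 := fun θ =>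
    (Real.sqrt_pos.2 (hDen_pos θ)).ne'
  have hc2 : Continuous (fun θ : ℝ => 1 / Real.sqrt (1 - 3/4 * Real.sin θ ^ 2)) :=
    continuous_const.div hc1 hne
  unfold Aint hEl ellipticE ellipticK
  rw [intervalIntegral.integral_sub (f := fun θ => 32/45 * Real.sqrt (1 - 3/4 * Real.sin θ ^ 2))
    (g := fun θ => 2/45 * (1 / Real.sqrt (1 - 3/4 * Real.sin θ ^ 2)))
    ((continuous_const.mul hc1).intervalIntegrable _ _)
    ((continuous_const.mul hc2).intervalIntegrable _ _),
    intervalIntegral.integral_const_mul, intervalIntegral.integral_const_mul]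

theorem oloid_Ixx_single_integral :
    ∫ t in (-(2*π/3))..(2*π/3),
        -(Real.cos t ^ 2 *
            (-2510 * Real.cos t + 547 * Real.cos (2*t) + 1129 * Real.cos (3*t) +
              648 * Real.cos (4*t) + 181 * Real.cos (5*t) + 21 * Real.cos (6*t) - 1744)) /
          (15360 * Real.cos (t/2) ^ 8 * Real.sqrt (2 * Real.cos t + 1)) =
      32/45 * ellipticE (3/4) - 2/45 * ellipticK (3/4) := by
  have hpi := Real.pi_pos
  have hab : -(2*π/3) ≤ 2*π/3 := by linarith
  have hFTC := intervalIntegral.integral_eq_sub_of_hasDeriv_right_of_le hab PhiF_cont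
    (fun t ht => (PhiF_deriv ht).hasDerivWithinAt) fInt_integrable
  have hval : PhiF (2*π/3) - PhiF (-(2*π/3)) = 32/45 * ellipticE (3/4) - 2/45 * ellipticK (3/4) := by
    unfold PhiF
    rw [Gfun_right, Gfun_left, psiF_right, psiF_left, Aint_neg, Aint_value]
    ring
  rw [← hval, ← hFTC]
  rfl
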